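/- Let w be a double occurrence word on a finite set V with interlacement graph G = I(w). For distinct v, u ∈ V define β(v,u) ∈ GF(2) by: β(v,u) = 0 if the interior of v contains the second occurrence of u but not the first, or contains neither occurrence of u; and β(v,u) = 1 if the interior of v contains the first occurrence of u but not the second, or contains both occurrences of u. Then β is a solution of the Naji equations for G. -/

import Mathlib

open Matrix

noncomputable section

/-- `w` is a double occurrence word on `V`: each element of `V` occurs exactly twice. -/
def IsDOW {V : Type*} [DecidableEq V] (w : List V) : Prop := ∀ v : V, w.count v = 2

/-- Distinct `u` and `v` are interlaced in `w`: their occurrences appear in the order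
`u v u v` or `v u v u`. -/
def Interlaced {V : Type*} (w : List V) (u v : V) : Prop :=
  [u, v, u, v].Sublist w ∨ [v, u, v, u].Sublist w

/-- The position of the first occurrence `v⁻` of `v` in `w`. -/
def fstIdx {V : Type*} [DecidableEq V] (w : List V) (v : V) : ℕ :=
  w.findIdx (fun x => decide (x = v))

/-- The position of the second occurrence `v⁺` of `v` in `w`. -/
def sndIdx {V : Type*} [DecidableEq V] (w : List V) (v : V) : ℕ :=
  fstIdx w v + 1 + (w.drop (fstIdx w v + 1)).findIdx (fun x => decide (x = v))

/-- Position `k` lies in the interior of `v` in `w`, i.e. strictly between `v⁻` and `v⁺`. -/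
def inInterior {V : Type*} [DecidableEq V] (w : List V) (v : V) (k : ℕ) : Prop :=
  fstIdx w v < k ∧ k < sndIdx w v

instance {V : Type*} [DecidableEq V] (w : List V) (v : V) (k : ℕ) :
    Decidable (inInterior w v k) := by unfold inInterior; infer_instance


/-- The Naji assignment extracted from a double occurrence word: `β(v,u) = 1` iff the
interior of `v` contains the first occurrence of `u` (equivalently: contains `u⁻` but
not `u⁺`, or both occurrences of `u`). -/
def najiBeta {V : Type*} [DecidableEq V] (w : List V) (v u : V) : ZMod 2 :=
  if inInterior w v (fstIdx w u) then 1 else 0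

section Aux

variable {V : Type} [DecidableEq V] {w : List V} {v u : V}

lemma getElem_congr' {α : Type*} (l : List α) {i j : ℕ} (h : i = j) (hj : j < l.length) :
    l[i]'(h ▸ hj) = l[j] := by subst h; rfl

lemma fstIdx_lt_length (h : w.count v = 2) : fstIdx w v < w.length := by
  apply List.findIdx_lt_length_of_exists
  exact ⟨v, List.count_pos_iff.mp (by omega), by simp⟩

lemma getElem_fstIdx (h : w.count v = 2) : w[fstIdx w v]'(fstIdx_lt_length h) = v := by
  have := @List.findIdx_getElem _ (fun x => decide (x = v)) w (fstIdx_lt_length h)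
  simp only [decide_eq_true_eq] at this; exact this

lemma ne_of_lt_fstIdx {k : ℕ} (hk : k < fstIdx w v) (hkl : k < w.length) :
    w[k] ≠ v := by
  have := List.not_of_lt_findIdx (p := fun x => decide (x = v)) (xs := w) hk
  simpa using this

lemma count_drop_fstIdx (h : w.count v = 2) :
    (w.drop (fstIdx w v + 1)).count v = 1 := by
  have hal : fstIdx w v < w.length := fstIdx_lt_length h
  have h1 : w = w.take (fstIdx w v) ++ w[fstIdx w v] :: w.drop (fstIdx w v + 1) := by
    rw [← List.drop_eq_getElem_cons hal, List.take_append_drop]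
  have h2 : (w.take (fstIdx w v)).count v = 0 := by
    rw [List.count_eq_zero]
    intro hmem
    obtain ⟨i, hi, hiv⟩ := List.mem_iff_getElem.mp hmem
    rw [List.getElem_take] at hiv
    have hia : i < fstIdx w v := by
      have : (w.take (fstIdx w v)).length = min (fstIdx w v) w.length := List.length_take; omega
    exact ne_of_lt_fstIdx hia (by omega) hiv
  have := h
  conv at this => rw [h1]
  rw [List.count_append, List.count_cons, h2, getElem_fstIdx h] at this
  simpa using this

lemma sndIdx_lt_length (h : w.count v = 2) : sndIdx w v < w.length := by
  have h1 : (w.drop (fstIdx w v + 1)).count v = 1 := count_drop_fstIdx h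
  have h2 : (w.drop (fstIdx w v + 1)).findIdx (fun x => decide (x = v)) <
      (w.drop (fstIdx w v + 1)).length := by
    apply List.findIdx_lt_length_of_exists
    exact ⟨v, List.count_pos_iff.mp (by omega), by simp⟩
  have : (w.drop (fstIdx w v + 1)).length = w.length - (fstIdx w v + 1) := List.length_drop
  unfold sndIdx
  omega

lemma fstIdx_lt_sndIdx : fstIdx w v < sndIdx w v := by
  unfold sndIdx; omega

lemma getElem_sndIdx (h : w.count v = 2) : w[sndIdx w v]'(sndIdx_lt_length h) = v := by
  have h1 : (w.drop (fstIdx w v + 1)).count v = 1 := count_drop_fstIdx h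
  have h2 : (w.drop (fstIdx w v + 1)).findIdx (fun x => decide (x = v)) <
      (w.drop (fstIdx w v + 1)).length := by
    apply List.findIdx_lt_length_of_exists
    exact ⟨v, List.count_pos_iff.mp (by omega), by simp⟩
  have h3 := @List.findIdx_getElem _ (fun x => decide (x = v))
      (w.drop (fstIdx w v + 1)) h2
  rw [List.getElem_drop] at h3
  simp only [decide_eq_true_eq] at h3
  have : sndIdx w v = fstIdx w v + 1 +
      (w.drop (fstIdx w v + 1)).findIdx (fun x => decide (x = v)) := rfl
  simp only [this]
  exact h3

lemma eq_fstIdx_or_sndIdx (h : w.count v = 2) {k : ℕ} (hk : k < w.length)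
    (hkv : w[k] = v) : k = fstIdx w v ∨ k = sndIdx w v := by
  set a := fstIdx w v with ha
  set t := w.drop (a + 1) with ht
  set c := t.findIdx (fun x => decide (x = v)) with hc
  have hsnd : sndIdx w v = a + 1 + c := rfl
  rcases lt_trichotomy k a with hlt | heq | hgt
  · exact absurd hkv (ne_of_lt_fstIdx hlt hk)
  · exact Or.inl heq
  · -- k > a
    right
    have htc : t.count v = 1 := count_drop_fstIdx h
    have hclen : c < t.length := by
      apply List.findIdx_lt_length_of_exists
      exact ⟨v, List.count_pos_iff.mp (by omega), by simp⟩
    have htl : t.length = w.length - (a + 1) := by simp [ht]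
    have hj : k - (a + 1) < t.length := by omega
    have hjv : t[k - (a + 1)]'hj = v := by
      show (w.drop (a + 1))[k - (a + 1)]'hj = v
      rw [List.getElem_drop]
      exact (getElem_congr' w (by omega : a + 1 + (k - (a + 1)) = k) hk).trans hkv
    rcases lt_trichotomy (k - (a + 1)) c with hlt' | heq' | hgt'
    · have := List.not_of_lt_findIdx (p := fun x => decide (x = v)) (xs := t) hlt'
      simp only [decide_eq_false_iff_not] at this
      exact absurd hjv this
    · omega
    · -- third occurrence: contradiction
      exfalso
      have hd : t = t.take c ++ t[c] :: t.drop (c + 1) := by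
        rw [← List.drop_eq_getElem_cons hclen, List.take_append_drop]
      have htcv : t[c] = v := by
        have := @List.findIdx_getElem _ (fun x => decide (x = v)) t hclen
        simpa using this
      have htake : (t.take c).count v = 0 := by
        rw [List.count_eq_zero]
        intro hmem
        obtain ⟨i, hi, hiv⟩ := List.mem_iff_getElem.mp hmem
        rw [List.getElem_take] at hiv
        have hia : i < c := by
          have : (t.take c).length = min c t.length := List.length_take; omega
        have := List.not_of_lt_findIdx (p := fun x => decide (x = v)) (xs := t) hia
        simp only [decide_eq_false_iff_not] at this
        exact this hiv
      have hd0 : (t.drop (c + 1)).count v = 0 := by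
        have h9 := htc
        conv at h9 => rw [hd]
        rw [List.count_append, List.count_cons, htcv, htake] at h9
        simp only [beq_self_eq_true, if_true] at h9
        omega
      rw [List.count_eq_zero] at hd0
      apply hd0
      rw [List.mem_iff_getElem]
      refine ⟨k - (a + 1) - (c + 1), ?_, ?_⟩
      · have : (t.drop (c + 1)).length = t.length - (c + 1) := List.length_drop; omega
      · rw [List.getElem_drop]
        exact (getElem_congr' t (by omega : c + 1 + (k - (a + 1) - (c + 1)) = k - (a + 1)) hj).trans hjv

lemma idx_ne_idx (hu : w.count u = 2) (hv : w.count v = 2) (huv : u ≠ v)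
    {i j : ℕ} (hi : i < w.length) (hj : j < w.length)
    (hiu : w[i] = u) (hjv : w[j] = v) : i ≠ j := by
  rintro rfl
  exact huv (hiu ▸ hjv)

lemma uvuv_sublist_iff (hu : w.count u = 2) (hv : w.count v = 2) (huv : u ≠ v) :
    [u, v, u, v].Sublist w ↔
      fstIdx w u < fstIdx w v ∧ fstIdx w v < sndIdx w u ∧ sndIdx w u < sndIdx w v := by
  constructor
  · intro hs
    obtain ⟨is, his, hp⟩ := List.sublist_eq_map_getElem hs
    have hlen : is.length = 4 := by
      have := congrArg List.length his; simpa using this.symm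
    obtain ⟨i, j, k, m, rfl⟩ : ∃ a b c d, is = [a, b, c, d] := by
      rcases is with _|⟨a,_|⟨b,_|⟨c,_|⟨d,_|⟨e,r⟩⟩⟩⟩⟩ <;> simp_all
    simp only [List.map_cons, List.map_nil, List.cons.injEq, and_true] at his
    obtain ⟨h1, h2, h3, h4⟩ := his
    have hij : (i : ℕ) < j := by
      have := List.pairwise_cons.mp hp
      exact_mod_cast this.1 j (by simp)
    have hjk : (j : ℕ) < k := by
      have := List.pairwise_cons.mp (List.pairwise_cons.mp hp).2
      exact_mod_cast this.1 k (by simp)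
    have hkm : (k : ℕ) < m := by
      have := List.pairwise_cons.mp (List.pairwise_cons.mp (List.pairwise_cons.mp hp).2).2
      exact_mod_cast this.1 m (by simp)
    have hiu := eq_fstIdx_or_sndIdx hu i.isLt h1.symm
    have hku := eq_fstIdx_or_sndIdx hu k.isLt h3.symm
    have hjv := eq_fstIdx_or_sndIdx hv j.isLt h2.symm
    have hmv := eq_fstIdx_or_sndIdx hv m.isLt h4.symm
    have h5 : fstIdx w u < sndIdx w u := fstIdx_lt_sndIdx
    have h6 : fstIdx w v < sndIdx w v := fstIdx_lt_sndIdx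
    omega
  · rintro ⟨h1, h2, h3⟩
    have hfu := fstIdx_lt_length hu
    have hsu := sndIdx_lt_length hu
    have hfv := fstIdx_lt_length hv
    have hsv := sndIdx_lt_length hv
    have hs := List.map_getElem_sublist (l := w)
      (is := [⟨fstIdx w u, hfu⟩, ⟨fstIdx w v, hfv⟩, ⟨sndIdx w u, hsu⟩, ⟨sndIdx w v, hsv⟩])
      (by
        refine List.pairwise_cons.mpr ⟨?_, List.pairwise_cons.mpr ⟨?_,
          List.pairwise_cons.mpr ⟨?_, List.pairwise_cons.mpr ⟨?_, List.Pairwise.nil⟩⟩⟩⟩ <;>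
          · intro x hx
            fin_cases hx <;> simp [Fin.lt_def] <;> omega)
    simpa [getElem_fstIdx hu, getElem_fstIdx hv, getElem_sndIdx hu,
      getElem_sndIdx hv] using hs

lemma interlaced_iff (hu : w.count u = 2) (hv : w.count v = 2) (huv : u ≠ v) :
    Interlaced w u v ↔
      (fstIdx w u < fstIdx w v ∧ fstIdx w v < sndIdx w u ∧ sndIdx w u < sndIdx w v) ∨
      (fstIdx w v < fstIdx w u ∧ fstIdx w u < sndIdx w v ∧ sndIdx w v < sndIdx w u) := by
  unfold Interlaced
  rw [uvuv_sublist_iff hu hv huv, uvuv_sublist_iff hv hu (Ne.symm huv)]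

lemma fstIdx_ne (hu : w.count u = 2) (hv : w.count v = 2) (huv : u ≠ v) :
    fstIdx w u ≠ fstIdx w v ∧ fstIdx w u ≠ sndIdx w v ∧
    sndIdx w u ≠ fstIdx w v ∧ sndIdx w u ≠ sndIdx w v :=
  ⟨idx_ne_idx hu hv huv (fstIdx_lt_length hu) (fstIdx_lt_length hv)
      (getElem_fstIdx hu) (getElem_fstIdx hv),
   idx_ne_idx hu hv huv (fstIdx_lt_length hu) (sndIdx_lt_length hv)
      (getElem_fstIdx hu) (getElem_sndIdx hv),
   idx_ne_idx hu hv huv (sndIdx_lt_length hu) (fstIdx_lt_length hv)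
      (getElem_sndIdx hu) (getElem_fstIdx hv),
   idx_ne_idx hu hv huv (sndIdx_lt_length hu) (sndIdx_lt_length hv)
      (getElem_sndIdx hu) (getElem_sndIdx hv)⟩

end Aux

/-- `najiBeta w` is a solution of the Naji equations for the interlacement graph
`I(w)` (where distinct `u,v` are adjacent iff they are interlaced in `w`). -/
theorem najiBeta_solves_naji_equations
    {V : Type} [Fintype V] [DecidableEq V] (w : List V) (hw : IsDOW w) :
    (∀ v u : V, v ≠ u → Interlaced w v u →
      najiBeta w v u + najiBeta w u v = 1) ∧
    (∀ v u x : V, v ≠ u → Interlaced w v u → x ≠ v → x ≠ u →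
      ¬ Interlaced w x v → ¬ Interlaced w x u →
      najiBeta w x v + najiBeta w x u = 0) ∧
    (∀ v u x : V, v ≠ u → v ≠ x → u ≠ x →
      Interlaced w v u → Interlaced w v x → ¬ Interlaced w u x →
      najiBeta w v u + najiBeta w v x + najiBeta w u x + najiBeta w x u = 1) := by
  refine ⟨?_, ?_, ?_⟩
  · intro v u hvu hI
    rw [interlaced_iff (hw v) (hw u) hvu] at hI
    have h1 : fstIdx w v < sndIdx w v := fstIdx_lt_sndIdx
    have h2 : fstIdx w u < sndIdx w u := fstIdx_lt_sndIdx
    obtain ⟨n1, n2, n3, n4⟩ := fstIdx_ne (hw v) (hw u) hvu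
    unfold najiBeta
    split_ifs <;> simp only [inInterior] at * <;> first | decide | omega
  · intro v u x hvu hI hxv hxu hNxv hNxu
    rw [interlaced_iff (hw v) (hw u) hvu] at hI
    rw [interlaced_iff (hw x) (hw v) hxv] at hNxv
    rw [interlaced_iff (hw x) (hw u) hxu] at hNxu
    have h1 : fstIdx w v < sndIdx w v := fstIdx_lt_sndIdx
    have h2 : fstIdx w u < sndIdx w u := fstIdx_lt_sndIdx
    have h3 : fstIdx w x < sndIdx w x := fstIdx_lt_sndIdx
    obtain ⟨a1, a2, a3, a4⟩ := fstIdx_ne (hw v) (hw u) hvu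
    obtain ⟨b1, b2, b3, b4⟩ := fstIdx_ne (hw x) (hw v) hxv
    obtain ⟨c1, c2, c3, c4⟩ := fstIdx_ne (hw x) (hw u) hxu
    unfold najiBeta
    split_ifs <;> simp only [inInterior] at * <;> first | decide | omega
  · intro v u x hvu hvx hux hIvu hIvx hNux
    rw [interlaced_iff (hw v) (hw u) hvu] at hIvu
    rw [interlaced_iff (hw v) (hw x) hvx] at hIvx
    rw [interlaced_iff (hw u) (hw x) hux] at hNux
    have h1 : fstIdx w v < sndIdx w v := fstIdx_lt_sndIdx
    have h2 : fstIdx w u < sndIdx w u := fstIdx_lt_sndIdx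
    have h3 : fstIdx w x < sndIdx w x := fstIdx_lt_sndIdx
    obtain ⟨a1, a2, a3, a4⟩ := fstIdx_ne (hw v) (hw u) hvu
    obtain ⟨b1, b2, b3, b4⟩ := fstIdx_ne (hw v) (hw x) hvx
    obtain ⟨c1, c2, c3, c4⟩ := fstIdx_ne (hw u) (hw x) hux
    unfold najiBeta
    split_ifs <;> simp only [inInterior] at * <;> first | decide | omega
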